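/- Let p ≥ 1 be a natural number, c > 0 a real number, and f : ℝ → ℝ continuous on [0,1] and continuously differentiable on (0,1], with f(x) = c·x^p + o(x^p) and f′(x) = c·p·x^(p−1) + o(x^(p−1)) as x → 0⁺. Then ε^(2−p) · (∫₀^ε f′(x)² dx) / (∫₀^ε f(x) dx) → c·p²·(p+1)/(2p−1) as ε → 0⁺. In particular, for p = 1 the quotient of stiffness to row-sum lumped mass of the cut part diverges like ε^(−1), while for p ≥ 2 it remains bounded as ε → 0⁺. -/

import Mathlib

open MeasureTheory Filter Set Topology

lemma lemA (g : ℝ → ℝ) (q : ℕ) (L : ℝ)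
    (hg : ContinuousOn g (Ioc 0 1))
    (hlim : Tendsto (fun x => g x / x ^ q) (𝓝[>] (0:ℝ)) (𝓝 L)) :
    Tendsto (fun ε => (∫ x in (0:ℝ)..ε, g x) / ε ^ (q + 1)) (𝓝[>] (0:ℝ))
      (𝓝 (L / (q + 1))) := by
  rw [Metric.tendsto_nhdsWithin_nhds] at hlim ⊢
  intro η hη
  obtain ⟨δ₁, hδ₁, hδ⟩ := hlim (η / 2) (by linarith)
  refine ⟨min δ₁ 1, by positivity, fun {ε} hεmem hεd => ?_⟩
  have hε : (0:ℝ) < ε := hεmem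
  rw [Real.dist_eq, sub_zero, abs_of_pos hε] at hεd
  have hε1 : ε ≤ 1 := le_of_lt (lt_of_lt_of_le hεd (min_le_right _ _))
  have hεδ₁ : ε < δ₁ := lt_of_lt_of_le hεd (min_le_left _ _)
  have hq1 : (0:ℝ) < (q:ℝ) + 1 := by positivity
  -- pointwise bound on Ioc 0 ε
  have hbound : ∀ x ∈ Ioc (0:ℝ) ε, |g x - L * x ^ q| ≤ η / 2 * x ^ q := by
    intro x hx
    have hx0 : (0:ℝ) < x := hx.1
    have hxp : (0:ℝ) < x ^ q := pow_pos hx0 q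
    have h := hδ (x := x) hx0
      (by rw [Real.dist_eq, sub_zero, abs_of_pos hx0]; exact lt_of_le_of_lt hx.2 hεδ₁)
    rw [Real.dist_eq] at h
    have heq : g x - L * x ^ q = (g x / x ^ q - L) * x ^ q := by
      field_simp
    rw [heq, abs_mul, abs_of_pos hxp]
    exact mul_le_mul_of_nonneg_right h.le hxp.le
  -- integrability of g on [0, ε]
  have hmeas : AEStronglyMeasurable g (volume.restrict (Ioc 0 ε)) :=
    (hg.mono (Ioc_subset_Ioc_right hε1)).aestronglyMeasurable measurableSet_Ioc
  have habs : ∀ x ∈ Ioc (0:ℝ) ε, ‖g x‖ ≤ |L| + η / 2 := by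
    intro x hx
    have hxp1 : x ^ q ≤ 1 := pow_le_one₀ hx.1.le (le_trans hx.2 hε1)
    have hxp0 : (0:ℝ) ≤ x ^ q := pow_nonneg hx.1.le q
    have h1 := hbound x hx
    have h2 : |g x| ≤ |L * x ^ q| + η / 2 * x ^ q := by
      have := abs_sub_abs_le_abs_sub (g x) (L * x ^ q)
      linarith
    rw [Real.norm_eq_abs]
    have h3 : |L * x ^ q| + η / 2 * x ^ q ≤ |L| + η / 2 := by
      rw [abs_mul, abs_of_nonneg hxp0]
      nlinarith [abs_nonneg L]
    linarith
  have hint : IntervalIntegrable g volume 0 ε := by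
    rw [intervalIntegrable_iff, uIoc_of_le hε.le]
    refine Integrable.mono' (integrable_const (|L| + η / 2)) hmeas ?_
    exact (ae_restrict_iff' measurableSet_Ioc).2 (Filter.Eventually.of_forall habs)
  have hintp : IntervalIntegrable (fun x => L * x ^ q) volume 0 ε :=
    (intervalIntegral.intervalIntegrable_pow q).const_mul L
  have hintp2 : IntervalIntegrable (fun x => η / 2 * x ^ q) volume 0 ε :=
    (intervalIntegral.intervalIntegrable_pow q).const_mul (η / 2)
  -- integral estimate
  have hpow : (∫ x in (0:ℝ)..ε, x ^ q) = ε ^ (q + 1) / (q + 1) := by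
    rw [integral_pow]; simp
  have hest : |(∫ x in (0:ℝ)..ε, g x) - L * ε ^ (q + 1) / (q + 1)| ≤
      η / 2 * ε ^ (q + 1) / (q + 1) := by
    have h1 : (∫ x in (0:ℝ)..ε, g x) - L * ε ^ (q + 1) / (q + 1) =
        ∫ x in (0:ℝ)..ε, (g x - L * x ^ q) := by
      rw [intervalIntegral.integral_sub hint hintp, intervalIntegral.integral_const_mul, hpow]
      ring
    rw [h1, ← Real.norm_eq_abs]
    have h2 := intervalIntegral.norm_integral_le_abs_of_norm_le (μ := volume) (a := 0) (b := ε)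
      (f := fun x => g x - L * x ^ q) (g := fun x => η / 2 * x ^ q)
      ?_ hintp2
    · calc ‖∫ x in (0:ℝ)..ε, (g x - L * x ^ q)‖ ≤
          |∫ x in (0:ℝ)..ε, η / 2 * x ^ q| := h2
        _ = η / 2 * ε ^ (q + 1) / (q + 1) := by
            rw [intervalIntegral.integral_const_mul, hpow, abs_of_nonneg (by positivity)]
            ring
    · rw [uIoc_of_le hε.le]
      refine (ae_restrict_iff' measurableSet_Ioc).2 (Filter.Eventually.of_forall ?_)
      intro x hx
      simpa using hbound x hx
  -- conclude
  have hE : (0:ℝ) < ε ^ (q + 1) := pow_pos hε _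
  rw [Real.dist_eq]
  have heq2 : (∫ x in (0:ℝ)..ε, g x) / ε ^ (q + 1) - L / (q + 1) =
      ((∫ x in (0:ℝ)..ε, g x) - L * ε ^ (q + 1) / (q + 1)) / ε ^ (q + 1) := by
    field_simp
  rw [heq2, abs_div, abs_of_pos hE, div_lt_iff₀ hE]
  calc |(∫ x in (0:ℝ)..ε, g x) - L * ε ^ (q + 1) / (q + 1)| ≤
      η / 2 * ε ^ (q + 1) / (q + 1) := hest
    _ ≤ η / 2 * ε ^ (q + 1) := by
        rw [div_le_iff₀ hq1]
        nlinarith [mul_nonneg (mul_nonneg hη.le hE.le) (Nat.cast_nonneg q : (0:ℝ) ≤ (q:ℝ))]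
    _ < η * ε ^ (q + 1) := by nlinarith

/-- With `f x = c·x^p + o(x^p)` and `f′ x = c·p·x^(p−1) + o(x^(p−1))`
as `x → 0⁺` (`p ≥ 1`, `c > 0`), the quotient of second-order stiffness against
row-sum lumped mass satisfies
`ε^(2−p) · (∫₀^ε f′² dx)/(∫₀^ε f dx) → c·p²·(p+1)/(2p−1)` as `ε → 0⁺`. -/
theorem rayleigh_second_order_lumped_mass
    (p : ℕ) (hp : 1 ≤ p) (c : ℝ) (hc : 0 < c) (f : ℝ → ℝ)
    (hf : ContinuousOn f (Icc 0 1))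
    (hdf : DifferentiableOn ℝ f (Ioc 0 1))
    (hdf' : ContinuousOn (deriv f) (Ioc 0 1))
    (hasymp : Tendsto (fun x => (f x - c * x ^ p) / x ^ p) (𝓝[>] (0:ℝ)) (𝓝 0))
    (hasymp' : Tendsto
      (fun x => (deriv f x - c * (p : ℝ) * x ^ (p - 1)) / x ^ (p - 1))
      (𝓝[>] (0:ℝ)) (𝓝 0)) :
    Tendsto (fun ε =>
        ε ^ ((2 : ℤ) - (p : ℤ)) * (∫ x in (0:ℝ)..ε, (deriv f x) ^ 2) /
          (∫ x in (0:ℝ)..ε, f x))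
      (𝓝[>] (0:ℝ))
      (𝓝 (c * (p : ℝ) ^ 2 * ((p : ℝ) + 1) / (2 * (p : ℝ) - 1))) := by
  obtain ⟨k, rfl⟩ : ∃ k, p = k + 1 := ⟨p - 1, (Nat.succ_pred_eq_of_pos hp).symm⟩
  simp only [Nat.add_sub_cancel, Nat.cast_add, Nat.cast_one] at hasymp'
  -- limit for f
  have hlimf : Tendsto (fun x => f x / x ^ (k + 1)) (𝓝[>] (0:ℝ)) (𝓝 c) := by
    have h1 : Tendsto (fun x => (f x - c * x ^ (k + 1)) / x ^ (k + 1) + c)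
        (𝓝[>] (0:ℝ)) (𝓝 (0 + c)) := hasymp.add tendsto_const_nhds
    rw [zero_add] at h1
    refine h1.congr' ?_
    filter_upwards [self_mem_nhdsWithin] with x hx
    have : (x:ℝ) ^ (k + 1) ≠ 0 := (pow_pos (show (0:ℝ) < x from hx) _).ne'
    field_simp
    ring
  -- limit for deriv f
  have hlimd : Tendsto (fun x => deriv f x / x ^ k) (𝓝[>] (0:ℝ))
      (𝓝 (c * ((k:ℝ) + 1))) := by
    have h1 : Tendsto (fun x => (deriv f x - c * ((k:ℝ) + 1) * x ^ k) / x ^ k + c * ((k:ℝ) + 1))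
        (𝓝[>] (0:ℝ)) (𝓝 (0 + c * ((k:ℝ) + 1))) := hasymp'.add tendsto_const_nhds
    rw [zero_add] at h1
    refine h1.congr' ?_
    filter_upwards [self_mem_nhdsWithin] with x hx
    have : (x:ℝ) ^ k ≠ 0 := (pow_pos (show (0:ℝ) < x from hx) _).ne'
    field_simp
    ring
  have hlimg : Tendsto (fun x => (deriv f x) ^ 2 / x ^ (k * 2)) (𝓝[>] (0:ℝ))
      (𝓝 ((c * ((k:ℝ) + 1)) ^ 2)) := by
    have h1 := hlimd.mul hlimd
    rw [← sq] at h1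
    refine Tendsto.congr (fun x => ?_) h1
    rw [div_mul_div_comm, ← sq, ← sq, ← pow_mul]
  -- apply lemA twice
  have hA := lemA f (k + 1) c (hf.mono Ioc_subset_Icc_self) hlimf
  have hB := lemA (fun x => (deriv f x) ^ 2) (k * 2) ((c * ((k:ℝ) + 1)) ^ 2)
    (hdf'.pow 2) hlimg
  have hAne : c / (((k + 1 : ℕ):ℝ) + 1) ≠ 0 := by positivity
  have hkey := hB.div hA hAne
  -- the limit value
  have hval : ((c * ((k:ℝ) + 1)) ^ 2 / (((k * 2 : ℕ):ℝ) + 1)) / (c / (((k + 1 : ℕ):ℝ) + 1)) =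
      c * (((k + 1 : ℕ):ℝ)) ^ 2 * ((((k + 1 : ℕ):ℝ)) + 1) / (2 * (((k + 1 : ℕ):ℝ)) - 1) := by
    have h1 : (0:ℝ) < (k:ℝ) * 2 + 1 := by positivity
    push_cast
    have h2 : (2:ℝ) * ((k:ℝ) + 1) - 1 = (k:ℝ) * 2 + 1 := by ring
    rw [h2]
    field_simp
  rw [← hval]
  refine hkey.congr' ?_
  filter_upwards [self_mem_nhdsWithin] with ε hε
  have hε0 : (0:ℝ) < ε := hε
  have hεne : ε ≠ 0 := hε0.ne'
  have hexp : (2 : ℤ) - ((k + 1 : ℕ) : ℤ) = ((k + 1 + 1 : ℕ) : ℤ) - ((k * 2 + 1 : ℕ) : ℤ) := by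
    push_cast; ring
  have hz : ε ^ ((2 : ℤ) - ((k + 1 : ℕ) : ℤ)) = ε ^ (k + 1 + 1) / ε ^ (k * 2 + 1) := by
    rw [hexp, zpow_sub₀ hεne, zpow_natCast, zpow_natCast]
  have ha : ε ^ (k * 2 + 1) ≠ 0 := pow_ne_zero _ hεne
  have hb : ε ^ (k + 1 + 1) ≠ 0 := pow_ne_zero _ hεne
  rcases eq_or_ne (∫ x in (0:ℝ)..ε, f x) 0 with h | h
  · simp [h, hz]
  · rw [hz]
    simp only [Pi.div_apply]
    field_simp
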